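/- arXiv:1902.00230 — 2 statements merged into one kernel-verified Lean document; each statement's English description precedes it below -/
import Mathlib

section
/- For every n ≥ 1, the number of permutations ρ of {1,…,n} such that ρ is obtainable from the identity by one MTDRL operation and the identity is obtainable from ρ by one MTDRL operation equals n. -/
/-- The TDRL operation with binary pattern `b` applied to a sequence `l`:
concatenate the entries at positions where `b` is `true` (in order)
with the entries at positions where `b` is `false` (in order). -/
def tdrl (b : List Bool) (l : List ℕ) : List ℕ :=
  ((l.zip b).filter (fun p => p.2)).map Prod.fst ++
  ((l.zip b).filter (fun p => !p.2)).map Prod.fst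

/-- The mirror-TDRL operation: kept entries of the original copy followed by
kept entries of the reversed copy. -/
def mtdrl (b : List Bool) (l : List ℕ) : List ℕ :=
  ((l.zip b).filter (fun p => p.2)).map Prod.fst ++
  (((l.zip b).filter (fun p => !p.2)).map Prod.fst).reverse

/-- The identity permutation `(1, 2, …, n)` as a list. -/
def ident (n : ℕ) : List ℕ := List.range' 1 n

/-- `l` is a permutation of `{1, …, n}`. -/
def IsPermOf (n : ℕ) (l : List ℕ) : Prop := l.Perm (ident n)

/-- Permutations obtainable from `π` by one TDRL operation. -/
def SOut (π : List ℕ) : Set (List ℕ) :=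
  {ρ | ∃ b : List Bool, b.length = π.length ∧ tdrl b π = ρ}

/-- Permutations `ρ` from which `π` is obtainable by one TDRL operation. -/
def SIn (π : List ℕ) : Set (List ℕ) :=
  {ρ | ρ.Perm π ∧ ∃ b : List Bool, b.length = ρ.length ∧ tdrl b ρ = π}

/-- Permutations obtainable from `π` by one MTDRL operation. -/
def SMOut (π : List ℕ) : Set (List ℕ) :=
  {ρ | ∃ b : List Bool, b.length = π.length ∧ mtdrl b π = ρ}

/-- Permutations `ρ` from which `π` is obtainable by one MTDRL operation. -/
def SMIn (π : List ℕ) : Set (List ℕ) :=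
  {ρ | ρ.Perm π ∧ ∃ b : List Bool, b.length = ρ.length ∧ mtdrl b ρ = π}

/-- Permutations obtainable from `π` by one bounded TDRL operation of width `k`. -/
def SOutK (k : ℕ) (π : List ℕ) : Set (List ℕ) :=
  {ρ | ∃ i, ∃ b : List Bool, i + k ≤ π.length ∧ b.length = k ∧
    ρ = π.take i ++ tdrl b ((π.drop i).take k) ++ π.drop (i + k)}

/-- Permutations `ρ` from which `π` is obtainable by one bounded TDRL of width `k`. -/
def SInK (k : ℕ) (π : List ℕ) : Set (List ℕ) :=
  {ρ | ρ.Perm π ∧ ∃ i, ∃ b : List Bool, i + k ≤ ρ.length ∧ b.length = k ∧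
    π = ρ.take i ++ tdrl b ((ρ.drop i).take k) ++ ρ.drop (i + k)}

/-- Permutations obtainable from `π` by one bounded MTDRL operation of width `k`. -/
def SMOutK (k : ℕ) (π : List ℕ) : Set (List ℕ) :=
  {ρ | ∃ i, ∃ b : List Bool, i + k ≤ π.length ∧ b.length = k ∧
    ρ = π.take i ++ mtdrl b ((π.drop i).take k) ++ π.drop (i + k)}

/-- Permutations `ρ` from which `π` is obtainable by one bounded MTDRL of width `k`. -/
def SMInK (k : ℕ) (π : List ℕ) : Set (List ℕ) :=
  {ρ | ρ.Perm π ∧ ∃ i, ∃ b : List Bool, i + k ≤ ρ.length ∧ b.length = k ∧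
    π = ρ.take i ++ mtdrl b ((ρ.drop i).take k) ++ ρ.drop (i + k)}


lemma zip_rep (l : List ℕ) (c : Bool) :
    l.zip (List.replicate l.length c) = l.map (fun x => (x, c)) := by
  induction l with
  | nil => simp
  | cons a l ih => simpa [List.replicate_succ] using ih

lemma filter_true_map (A : List ℕ) :
    (A.map (fun x => (x, true))).filter (fun p : ℕ × Bool => p.2) = A.map (fun x => (x, true)) := by
  induction A with
  | nil => simp
  | cons a l ih => simp [ih]

lemma filter_true_map' (A : List ℕ) :
    (A.map (fun x => (x, true))).filter (fun p : ℕ × Bool => !p.2) = [] := by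
  induction A with
  | nil => simp
  | cons a l ih => simp [ih]

lemma filter_false_map (A : List ℕ) :
    (A.map (fun x => (x, false))).filter (fun p : ℕ × Bool => !p.2) = A.map (fun x => (x, false)) := by
  induction A with
  | nil => simp
  | cons a l ih => simp [ih]

lemma filter_false_map' (A : List ℕ) :
    (A.map (fun x => (x, false))).filter (fun p : ℕ × Bool => p.2) = [] := by
  induction A with
  | nil => simp
  | cons a l ih => simp [ih]

lemma mtdrl_rep (A B : List ℕ) :
    mtdrl (List.replicate A.length true ++ List.replicate B.length false) (A ++ B)
      = A ++ B.reverse := by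
  unfold mtdrl
  rw [List.zip_append (by simp), zip_rep, zip_rep]
  rw [List.filter_append, List.filter_append, filter_true_map, filter_true_map',
    filter_false_map, filter_false_map']
  simp [Function.comp_def]

lemma mtdrl_decomp (b : List Bool) (l : List ℕ) (h : b.length = l.length) :
    ∃ K D : List ℕ, mtdrl b l = K ++ D.reverse ∧ K.Sublist l ∧ D.Sublist l ∧
      (K ++ D).Perm l := by
  refine ⟨((l.zip b).filter (fun p : ℕ × Bool => p.2)).map Prod.fst,
    ((l.zip b).filter (fun p : ℕ × Bool => !p.2)).map Prod.fst, rfl, ?_, ?_, ?_⟩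
  · have h1 : ((l.zip b).filter (fun p => p.2)).Sublist (l.zip b) := List.filter_sublist
    have := h1.map Prod.fst
    rwa [List.map_fst_zip (le_of_eq h.symm)] at this
  · have h1 : ((l.zip b).filter (fun p => !p.2)).Sublist (l.zip b) := List.filter_sublist
    have := h1.map Prod.fst
    rwa [List.map_fst_zip (le_of_eq h.symm)] at this
  · have := (List.filter_append_perm (fun p : ℕ × Bool => p.2) (l.zip b)).map Prod.fst
    rw [List.map_append] at this
    rwa [List.map_fst_zip (le_of_eq h.symm)] at this

lemma len_le_one {l : List ℕ} (h1 : l.Pairwise (· < ·)) (h2 : l.Pairwise (· > ·)) :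
    l = [] ∨ ∃ a, l = [a] := by
  match l with
  | [] => exact Or.inl rfl
  | [a] => exact Or.inr ⟨a, rfl⟩
  | a :: b :: t =>
    exfalso
    have hab : a < b := (List.pairwise_cons.mp h1).1 b (by simp)
    have hba : a > b := (List.pairwise_cons.mp h2).1 b (by simp)
    omega

lemma range'_split (s m k : ℕ) :
    List.range' s m ++ List.range' (s + m) k = List.range' s (m + k) := by
  have := List.range'_append (s := s) (m := m) (n := k) (step := 1)
  simpa [Nat.add_comm k m] using this

lemma core (n : ℕ) (hn : 1 ≤ n) (ρ s t C D : List ℕ)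
    (hρ : ρ = s ++ t)
    (hs : s.Pairwise (· < ·)) (ht : t.Pairwise (· > ·))
    (hC : C.Sublist ρ) (hD : D.Sublist ρ)
    (hCD : C ++ D.reverse = List.range' 1 n)
    (hρperm : ρ.Perm (List.range' 1 n)) :
    ∃ k < n, ρ = List.range' 1 k ++ (List.range' (k+1) (n-k)).reverse := by
  obtain ⟨j, hj⟩ : ∃ j, C.length = j := ⟨_, rfl⟩
  have hlen : C.length + D.length = n := by
    have := congrArg List.length hCD; simpa using this
  have hjn : j ≤ n := by omega
  have hsplit : List.range' 1 j ++ List.range' (1 + j) (n - j) = List.range' 1 n := by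
    have := range'_split 1 j (n - j)
    rwa [show j + (n - j) = n by omega] at this
  obtain ⟨hCeq, hDrev⟩ : C = List.range' 1 j ∧ D.reverse = List.range' (1+j) (n-j) :=
    List.append_inj (hCD.trans hsplit.symm) (by simp [hj])
  have hDeq : D = (List.range' (1+j) (n-j)).reverse := by
    rw [← hDrev, List.reverse_reverse]
  have hCp : C.Pairwise (· < ·) := hCeq ▸ List.pairwise_lt_range' (s := 1) (n := j)
  have hDp : D.Pairwise (· > ·) := by
    rw [hDeq]; exact List.pairwise_reverse.mpr (List.pairwise_lt_range' 1 (by simp))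
  rw [hρ] at hC hD
  obtain ⟨C₁, C₂, hCsplit, hC1, hC2⟩ := List.sublist_append_iff.mp hC
  obtain ⟨D₁, D₂, hDsplit, hD1, hD2⟩ := List.sublist_append_iff.mp hD
  have hρnd : ρ.Nodup := hρperm.nodup_iff.mpr (List.nodup_range' (s := 1) (n := n))
  have hCDnd : (C ++ D.reverse).Nodup := hCD ▸ List.nodup_range' (s := 1) (n := n)
  have hCnd : C.Nodup := (List.nodup_append'.mp hCDnd).1
  have hDnd : D.Nodup := List.nodup_reverse.mp (List.nodup_append'.mp hCDnd).2.1
  have hdisCD : C.Disjoint D := fun a ha hb =>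
    (List.nodup_append'.mp hCDnd).2.2 ha (List.mem_reverse.mpr hb)
  have hC2C : C₂.Sublist C := hCsplit ▸ List.sublist_append_right C₁ C₂
  have hC1C : C₁.Sublist C := hCsplit ▸ List.sublist_append_left C₁ C₂
  have hD1D : D₁.Sublist D := hDsplit ▸ List.sublist_append_left D₁ D₂
  have hD2D : D₂.Sublist D := hDsplit ▸ List.sublist_append_right D₁ D₂
  have hC2small : C₂ = [] ∨ ∃ a, C₂ = [a] :=
    len_le_one (hCp.sublist hC2C) (ht.sublist hC2)
  have hD1small : D₁ = [] ∨ ∃ a, D₁ = [a] :=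
    len_le_one (hs.sublist hD1) (hDp.sublist hD1D)
  have hsp1 : (C₁ ++ D₁).Subperm s := by
    apply List.Nodup.subperm
    · rw [List.nodup_append']
      exact ⟨hC1C.nodup hCnd, hD1D.nodup hDnd,
        fun a ha hb => hdisCD (hC1C.subset ha) (hD1D.subset hb)⟩
    · rw [List.append_subset]; exact ⟨hC1.subset, hD1.subset⟩
  have hsp2 : (C₂ ++ D₂).Subperm t := by
    apply List.Nodup.subperm
    · rw [List.nodup_append']
      exact ⟨hC2C.nodup hCnd,
        hD2D.nodup hDnd, fun a ha hb => hdisCD (hC2C.subset ha) (hD2D.subset hb)⟩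
    · rw [List.append_subset]; exact ⟨hC2.subset, hD2.subset⟩
  have hlenst : s.length + t.length = n := by
    have := hρperm.length_eq; rw [hρ] at this; simpa using this
  have hlen12 : C₁.length + C₂.length = j := by
    have := congrArg List.length hCsplit; simp at this; omega
  have hlenD12 : D₁.length + D₂.length + j = n := by
    have := congrArg List.length hDsplit; simp at this; omega
  have hle1 := hsp1.length_le
  have hle2 := hsp2.length_le
  simp only [List.length_append] at hle1 hle2
  have hp1 : (C₁ ++ D₁).Perm s :=
    hsp1.perm_of_length_le (by simp only [List.length_append]; omega)
  have hp2 : (C₂ ++ D₂).Perm t :=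
    hsp2.perm_of_length_le (by simp only [List.length_append]; omega)
  have hid_s : ∀ L : List ℕ, L.Pairwise (· < ·) → (C₁ ++ D₁).Perm L → s = L := fun L hL hpL =>
    List.Perm.eq_of_pairwise (fun a b _ _ h1 h2 => absurd h1 (lt_asymm h2)) hs hL (hp1.symm.trans hpL)
  have hid_t : ∀ L : List ℕ, L.Pairwise (· > ·) → (C₂ ++ D₂).Perm L → t = L := fun L hL hpL =>
    List.Perm.eq_of_pairwise (fun a b _ _ h1 h2 => absurd h1 (lt_asymm h2)) ht hL (hp2.symm.trans hpL)
  -- facts reused when C₂ = [c]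
  have hCsing : ∀ c, C₂ = [c] → 1 ≤ j ∧ C₁ = List.range' 1 (j-1) ∧ c = j := by
    intro c hc
    have hj1 : 1 ≤ j := by
      rw [hc] at hlen12; simp at hlen12; omega
    have hrj : List.range' 1 (j-1) ++ [j] = List.range' 1 j := by
      have := range'_split 1 (j-1) 1
      rw [show 1 + (j-1) = j by omega, show j - 1 + 1 = j by omega] at this
      simpa using this
    have h := (hCsplit.symm.trans (hCeq.trans hrj.symm))
    rw [hc] at h
    have := List.append_inj' h (by simp)
    exact ⟨hj1, this.1, by simpa using this.2⟩
  -- facts reused when D₁ = [d]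
  have hDsing : ∀ d, D₁ = [d] →
      j < n ∧ d = n ∧ D₂ = (List.range' (1+j) (n-j-1)).reverse := by
    intro d hd
    have hjlt : j < n := by rw [hd] at hlenD12; simp at hlenD12; omega
    have hr2 : List.range' (1+j) (n-j-1) ++ [n] = List.range' (1+j) (n-j) := by
      have := range'_split (1+j) (n-j-1) 1
      rw [show 1 + j + (n-j-1) = n by omega, show n - j - 1 + 1 = n - j by omega] at this
      simpa using this
    have hDform : D = [n] ++ (List.range' (1+j) (n-j-1)).reverse := by
      rw [hDeq, ← hr2, List.reverse_append]; simp
    rw [hDsplit, hd] at hDform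
    simp only [List.cons_append, List.nil_append, List.cons.injEq] at hDform
    exact ⟨hjlt, hDform.1, hDform.2⟩
  rcases hD1small with hD1e | ⟨d, hD1e⟩
  · subst hD1e
    have hD2e : D₂ = D := by simpa using hDsplit.symm
    rcases hC2small with hC2e | ⟨c, hC2e⟩
    · -- C₂ = [], D₁ = []
      subst hC2e
      have hC1e : C₁ = C := by simpa using hCsplit.symm
      have hseq : s = List.range' 1 j := hid_s _ (List.pairwise_lt_range' (s := 1) (n := j))
        (by rw [hC1e, hCeq]; simp)
      have hteq : t = (List.range' (1+j) (n-j)).reverse := hid_t _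
        (List.pairwise_reverse.mpr (List.pairwise_lt_range' 1 (by simp)))
        (by rw [hD2e, hDeq]; simp)
      rcases eq_or_lt_of_le hjn with hjeq | hjlt
      · subst hjeq
        refine ⟨j-1, by omega, ?_⟩
        have hfin : List.range' 1 (j-1) ++ [j] = List.range' 1 j := by
          have := range'_split 1 (j-1) 1
          rwa [show 1 + (j-1) = j by omega, show j - 1 + 1 = j by omega,
            List.range'_one] at this
        rw [hρ, hseq, hteq, show j - j = 0 by omega, show j - 1 + 1 = j by omega,
          show j - (j-1) = 1 by omega, List.range'_one]
        simp [← hfin]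
      · exact ⟨j, hjlt, by rw [hρ, hseq, hteq, show 1 + j = j + 1 by omega]⟩
    · -- C₂ = [c], D₁ = []
      obtain ⟨hj1, hC1e, hce⟩ := hCsing c hC2e
      have hseq : s = List.range' 1 (j-1) := hid_s _ (List.pairwise_lt_range' 1 (by simp))
        (by rw [hC1e]; simp)
      have hteq : t = (List.range' j (n-j+1)).reverse := by
        apply hid_t _ (List.pairwise_reverse.mpr (List.pairwise_lt_range' 1 (by simp)))
        have hr : List.range' j 1 ++ List.range' (j+1) (n-j) = List.range' j (n-j+1) := by
          have := range'_split j 1 (n-j)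
          rwa [show 1 + (n-j) = n - j + 1 by omega] at this
        rw [← hr, List.reverse_append, hC2e, hce, hD2e, hDeq,
          show 1 + j = j + 1 by omega]
        simp only [List.range'_one, List.reverse_singleton]
        exact List.perm_append_comm
      refine ⟨j-1, by omega, ?_⟩
      rw [hρ, hseq, hteq, show j - 1 + 1 = j by omega, show n - (j-1) = n - j + 1 by omega]
  · -- D₁ = [d]
    obtain ⟨hjlt, hde, hD2e⟩ := hDsing d hD1e
    rcases hC2small with hC2e | ⟨c, hC2e⟩
    · -- C₂ = [], D₁ = [d]
      subst hC2e
      have hC1e : C₁ = C := by simpa using hCsplit.symm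
      have hseq : s = List.range' 1 j ++ [n] := by
        apply hid_s
        · rw [List.pairwise_append]
          refine ⟨List.pairwise_lt_range' 1 (by simp), by simp, ?_⟩
          intro x hx y hy
          rw [List.mem_range'_1] at hx
          simp at hy; omega
        · rw [hD1e, hde, hC1e, hCeq]
      have hteq : t = (List.range' (1+j) (n-j-1)).reverse := hid_t _
        (List.pairwise_reverse.mpr (List.pairwise_lt_range' 1 (by simp)))
        (by rw [hD2e]; simp)
      refine ⟨j, hjlt, ?_⟩
      rw [hρ, hseq, hteq]
      have hr2 : List.range' (j+1) (n-j-1) ++ [n] = List.range' (j+1) (n-j) := by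
        have := range'_split (j+1) (n-j-1) 1
        rwa [show j + 1 + (n-j-1) = n by omega, show n - j - 1 + 1 = n - j by omega,
          List.range'_one] at this
      rw [← hr2, List.reverse_append, show 1 + j = j + 1 by omega]
      simp
    · -- C₂ = [c], D₁ = [d]
      obtain ⟨hj1, hC1e, hce⟩ := hCsing c hC2e
      have hseq : s = List.range' 1 (j-1) ++ [n] := by
        apply hid_s
        · rw [List.pairwise_append]
          refine ⟨List.pairwise_lt_range' 1 (by simp), by simp, ?_⟩
          intro x hx y hy
          rw [List.mem_range'_1] at hx
          simp at hy; omega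
        · rw [hD1e, hde, hC1e]
      have hteq : t = (List.range' j (n-j)).reverse := by
        apply hid_t _ (List.pairwise_reverse.mpr (List.pairwise_lt_range' 1 (by simp)))
        have hr : List.range' j 1 ++ List.range' (j+1) (n-j-1) = List.range' j (n-j) := by
          have := range'_split j 1 (n-j-1)
          rwa [show 1 + (n-j-1) = n - j by omega] at this
        rw [← hr, List.reverse_append, hC2e, hce, hD2e,
          show 1 + j = j + 1 by omega]
        simp only [List.range'_one, List.reverse_singleton]
        exact List.perm_append_comm
      refine ⟨j-1, by omega, ?_⟩
      rw [hρ, hseq, hteq, show j - 1 + 1 = j by omega, show n - (j-1) = n - j + 1 by omega]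
      have hr3 : List.range' j (n-j) ++ [n] = List.range' j (n-j+1) := by
        have := range'_split j (n-j) 1
        rwa [show j + (n-j) = n by omega, show n - j + 1 = n - j + 1 by omega,
          List.range'_one] at this
      rw [← hr3, List.reverse_append]
      simp

lemma flen {n k : ℕ} (hk : k ≤ n) :
    (List.range' 1 k ++ (List.range' (k+1) (n-k)).reverse).length = n := by
  simp [List.length_range']; omega

lemma ident_split {n k : ℕ} (hk : k ≤ n) :
    ident n = List.range' 1 k ++ List.range' (k+1) (n-k) := by
  unfold ident
  have h := range'_split 1 k (n - k)
  rw [show k + (n-k) = n by omega, show 1 + k = k + 1 by omega] at h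
  exact h.symm

lemma mem_inter_of_lt {n k : ℕ} (hk : k < n) :
    (List.range' 1 k ++ (List.range' (k+1) (n-k)).reverse) ∈
      SMOut (ident n) ∩ SMIn (ident n) := by
  set A := List.range' 1 k with hA
  set B := List.range' (k+1) (n-k) with hB
  have hAl : A.length = k := by simp [hA, List.length_range']
  have hBl : B.length = n - k := by simp [hB, List.length_range']
  have hid : ident n = A ++ B := ident_split (le_of_lt hk)
  constructor
  · refine ⟨List.replicate A.length true ++ List.replicate B.length false, ?_, ?_⟩
    · simp [hid]
    · rw [hid, mtdrl_rep]
  · refine ⟨?_, List.replicate A.length true ++ List.replicate B.reverse.length false, ?_, ?_⟩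
    · rw [hid]
      exact (List.reverse_perm B).append_left A
    · simp
    · rw [mtdrl_rep A B.reverse, List.reverse_reverse, hid]

theorem stmt_17 (n : ℕ) (hn : 1 ≤ n) :
    (SMOut (ident n) ∩ SMIn (ident n)).ncard = n := by
  have hset : SMOut (ident n) ∩ SMIn (ident n) =
      (fun k => List.range' 1 k ++ (List.range' (k+1) (n-k)).reverse) '' (Set.Iio n) := by
    ext ρ
    constructor
    · rintro ⟨⟨b, hbl, hbe⟩, hperm, b', hbl', hbe'⟩
      obtain ⟨K, Dd, hKD, hKs, hDs, hKDperm⟩ := mtdrl_decomp b (ident n) hbl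
      obtain ⟨K', D', hKD', hKs', hDs', hKDperm'⟩ := mtdrl_decomp b' ρ hbl'
      have hidp : (ident n).Pairwise (· < ·) := List.pairwise_lt_range' (s := 1) (n := n)
      obtain ⟨k, hkn, hke⟩ := core n hn ρ K Dd.reverse K' D'
        (by rw [← hbe, hKD])
        (hidp.sublist hKs)
        (List.pairwise_reverse.mpr (by simpa using hidp.sublist hDs))
        hKs' hDs'
        (by rw [← hKD', hbe']; rfl)
        (hperm)
      exact ⟨k, hkn, hke.symm⟩
    · rintro ⟨k, hk, rfl⟩
      exact mem_inter_of_lt hk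
  rw [hset, Set.ncard_image_of_injOn, ← Finset.coe_Iio, Set.ncard_coe_finset, Nat.card_Iio]
  -- injectivity
  have aux : ∀ k1 k2, k1 < k2 → k2 < n →
      List.range' 1 k1 ++ (List.range' (k1+1) (n-k1)).reverse ≠
      List.range' 1 k2 ++ (List.range' (k2+1) (n-k2)).reverse := by
    intro k1 k2 h12 h2n heq
    have hl1 : k1 < (List.range' 1 k1 ++ (List.range' (k1+1) (n-k1)).reverse).length := by
      rw [flen (by omega)]; omega
    have e1 : (List.range' 1 k1 ++ (List.range' (k1+1) (n-k1)).reverse)[k1]'hl1 = n := by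
      rw [List.getElem_append_right (by simp [List.length_range'])]
      rw [List.getElem_reverse]
      rw [List.getElem_range']
      simp [List.length_range']
      omega
    have e2 : (List.range' 1 k1 ++ (List.range' (k1+1) (n-k1)).reverse)[k1]'hl1 = 1 + k1 := by
      rw [List.getElem_of_eq heq]
      rw [List.getElem_append_left (by simp [List.length_range']; omega)]
      rw [List.getElem_range']
      omega
    omega
  intro k1 hk1 k2 hk2 heq
  simp only [Set.mem_Iio] at hk1 hk2
  rcases lt_trichotomy k1 k2 with h | h | h
  · exact absurd heq (aux k1 k2 h hk2)
  · exact h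
  · exact absurd heq.symm (aux k2 k1 h hk1)
end

section
/- For every n ≥ 2, the maximum over distinct permutations π, ρ of {1,…,n} of |S_mout(π) ∩ S_mout(ρ)| equals 2^{n−1}; in particular, for π = (1,2,…,n−2,n,n−1) (the identity with last two entries swapped), S_mout(identity) ⊆ S_mout(π). -/
namespace S18

def tp (l : List ℕ) (b : List Bool) : List ℕ :=
  ((l.zip b).filter (fun p => p.2)).map Prod.fst
def fp (l : List ℕ) (b : List Bool) : List ℕ :=
  ((l.zip b).filter (fun p => !p.2)).map Prod.fst

lemma mem_of_mem_tp {x : ℕ} {l : List ℕ} {b : List Bool} (h : x ∈ tp l b) : x ∈ l := by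
  simp only [tp, List.mem_map, List.mem_filter] at h
  obtain ⟨p, ⟨hp, _⟩, rfl⟩ := h
  exact (List.of_mem_zip hp).1

lemma tp_cons_true (z : ℕ) (t : List ℕ) (bt : List Bool) :
    tp (z :: t) (true :: bt) = z :: tp t bt := by simp [tp]
lemma tp_cons_false (z : ℕ) (t : List ℕ) (bt : List Bool) :
    tp (z :: t) (false :: bt) = tp t bt := by simp [tp]
lemma fp_cons_true (z : ℕ) (t : List ℕ) (bt : List Bool) :
    fp (z :: t) (true :: bt) = fp t bt := by simp [fp]
lemma fp_cons_false (z : ℕ) (t : List ℕ) (bt : List Bool) :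
    fp (z :: t) (false :: bt) = z :: fp t bt := by simp [fp]

lemma bits_inj (l : List ℕ) : ∀ (b b' : List Bool), l.Nodup →
    b.length = l.length → b'.length = l.length →
    tp l b = tp l b' → fp l b = fp l b' → b = b' := by
  induction l with
  | nil =>
    intro b b' _ hb hb' _ _
    rw [List.length_nil, List.length_eq_zero_iff] at hb hb'
    rw [hb, hb']
  | cons z t ih =>
    intro b b' hnd hb hb' htp hfp
    cases b with
    | nil => simp at hb
    | cons β bt =>
      cases b' with
      | nil => simp at hb'
      | cons β' bt' =>
        simp only [List.length_cons, Nat.add_right_cancel_iff] at hb hb'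
        have hz : z ∉ t := (List.nodup_cons.mp hnd).1
        have hnd' := (List.nodup_cons.mp hnd).2
        cases β <;> cases β' <;>
          simp only [tp_cons_true, tp_cons_false, fp_cons_true, fp_cons_false,
            List.cons.injEq, true_and] at htp hfp
        · rw [ih bt bt' hnd' hb hb' htp hfp]
        · exact absurd (mem_of_mem_tp (htp ▸ List.mem_cons_self (a := z))) hz
        · exact absurd (mem_of_mem_tp (htp.symm ▸ List.mem_cons_self (a := z))) hz
        · rw [ih bt bt' hnd' hb hb' htp hfp]

lemma mtdrl_append_one {b₀ : List Bool} {l₀ : List ℕ} (hlen : b₀.length = l₀.length)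
    (β : Bool) (x : ℕ) :
    mtdrl (b₀ ++ [β]) (l₀ ++ [x]) = tp l₀ b₀ ++ x :: (fp l₀ b₀).reverse := by
  cases β <;>
    simp [mtdrl, tp, fp, List.zip_append hlen.symm, List.filter_append, List.map_append]

lemma mtdrl_swap {b₀ : List Bool} {l₀ : List ℕ} (hlen : b₀.length = l₀.length)
    (β γ : Bool) (x y : ℕ) :
    mtdrl (b₀ ++ [!β, β]) (l₀ ++ [y, x]) = mtdrl (b₀ ++ [β, γ]) (l₀ ++ [x, y]) := by
  cases β <;> cases γ <;>
    simp [mtdrl, tp, fp, List.zip_append hlen.symm, List.filter_append, List.map_append]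

lemma append_cons_inj {α : Type*} (x : α) : ∀ (A A' C C' : List α), x ∉ A → x ∉ A' →
    A ++ x :: C = A' ++ x :: C' → A = A' ∧ C = C' := by
  intro A
  induction A with
  | nil =>
    intro A' C C' _ hA' h
    cases A' with
    | nil => simpa using h
    | cons a t =>
      simp only [List.nil_append, List.cons_append, List.cons.injEq] at h
      exact absurd (h.1 ▸ List.mem_cons_self (a := a) (l := t)) hA'
  | cons a t ih =>
    intro A' C C' hA hA' h
    cases A' with
    | nil =>
      simp only [List.nil_append, List.cons_append, List.cons.injEq] at h
      exact absurd (h.1 ▸ List.mem_cons_self (a := a) (l := t)) (h.1 ▸ hA)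
    | cons a' t' =>
      simp only [List.cons_append, List.cons.injEq] at h
      obtain ⟨h1, h2⟩ := ih t' C C' (fun hx => hA (List.mem_cons_of_mem _ hx))
        (fun hx => hA' (List.mem_cons_of_mem _ hx)) h.2
      exact ⟨by rw [h.1, h1], h2⟩

lemma eq_append_one {α : Type*} {l : List α} (h : 1 ≤ l.length) :
    ∃ t x, l = t ++ [x] ∧ t.length + 1 = l.length := by
  obtain ⟨r, rfl⟩ : ∃ r : List α, l = r.reverse := ⟨l.reverse, by simp⟩
  cases r with
  | nil => simp at h
  | cons a t => exact ⟨t.reverse, a, by simp, by simp⟩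

lemma eq_append_two {α : Type*} {l : List α} (h : 2 ≤ l.length) :
    ∃ t x y, l = t ++ [x, y] ∧ t.length + 2 = l.length := by
  obtain ⟨r, rfl⟩ : ∃ r : List α, l = r.reverse := ⟨l.reverse, by simp⟩
  cases r with
  | nil => simp at h
  | cons a t =>
    cases t with
    | nil => simp at h
    | cons c t' => exact ⟨t'.reverse, c, a, by simp, by simp⟩

lemma setS_eq (m : ℕ) :
    {b : List Bool | b.length = m} = Set.range (fun v : Fin m → Bool => List.ofFn v) := by
  ext b
  simp only [Set.mem_setOf_eq, Set.mem_range]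
  constructor
  · intro hb
    subst hb
    exact ⟨b.get, List.ofFn_get b⟩
  · rintro ⟨v, rfl⟩
    simp

lemma setS_finite (m : ℕ) : {b : List Bool | b.length = m}.Finite := by
  rw [setS_eq]; exact Set.finite_range _

lemma setS_ncard (m : ℕ) : {b : List Bool | b.length = m}.ncard = 2 ^ m := by
  rw [setS_eq, ← Set.image_univ, Set.ncard_image_of_injective _ (List.ofFn_injective),
    Set.ncard_univ]
  simp [Nat.card_eq_fintype_card]

lemma smout_eq {l₀ : List ℕ} (x : ℕ) :
    SMOut (l₀ ++ [x]) =
      (fun b₀ => tp l₀ b₀ ++ x :: (fp l₀ b₀).reverse) '' {b₀ | b₀.length = l₀.length} := by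
  ext τ
  constructor
  · rintro ⟨b, hb, rfl⟩
    simp only [List.length_append, List.length_singleton] at hb
    obtain ⟨b₀, β, rfl, hlen⟩ := eq_append_one (l := b) (by omega)
    have h0 : b₀.length = l₀.length := by omega
    exact ⟨b₀, h0, (mtdrl_append_one h0 β x).symm⟩
  · rintro ⟨b₀, hb₀, rfl⟩
    exact ⟨b₀ ++ [true], by simp [Set.mem_setOf_eq.mp hb₀], mtdrl_append_one hb₀ true x⟩

lemma smout_finite {l : List ℕ} (h : 1 ≤ l.length) : (SMOut l).Finite := by
  obtain ⟨l₀, x, rfl, -⟩ := eq_append_one h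
  rw [smout_eq]
  exact (setS_finite _).image _

lemma smout_ncard {l : List ℕ} (hnd : l.Nodup) (h : 1 ≤ l.length) :
    (SMOut l).ncard = 2 ^ (l.length - 1) := by
  obtain ⟨l₀, x, rfl, hlen⟩ := eq_append_one h
  have hx : x ∉ l₀ := by
    rw [List.nodup_append'] at hnd
    intro hmem; exact hnd.2.2 hmem (List.mem_singleton_self x)
  have hnd₀ : l₀.Nodup := (List.nodup_append.mp hnd).1
  rw [smout_eq]
  rw [Set.ncard_image_of_injOn ?inj, setS_ncard]
  · congr 1; simp
  case inj =>
    intro b₀ hb₀ b₀' hb₀' heq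
    simp only at heq
    have h1 := append_cons_inj x _ _ _ _
      (fun hm => hx (mem_of_mem_tp hm)) (fun hm => hx (mem_of_mem_tp hm)) heq
    exact bits_inj l₀ b₀ b₀' hnd₀ hb₀ hb₀' h1.1 (List.reverse_injective h1.2)

lemma ident_split {n : ℕ} (hn : 2 ≤ n) :
    ident n = List.range' 1 (n - 2) ++ [n - 1, n] := by
  have h2 : [n - 1, n] = List.range' (1 + 1 * (n - 2)) 2 := by
    simp [List.range']; omega
  rw [ident, h2, List.range'_append]
  congr 1; omega

lemma ident_length (n : ℕ) : (ident n).length = n := by simp [ident]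
lemma ident_nodup (n : ℕ) : (ident n).Nodup := List.nodup_range' (s := 1) (n := n)

lemma smout_incl {n : ℕ} (hn : 2 ≤ n) :
    SMOut (ident n) ⊆ SMOut (List.range' 1 (n - 2) ++ [n, n - 1]) := by
  rw [ident_split hn]
  rintro τ ⟨b, hb, rfl⟩
  simp at hb
  obtain ⟨b₀, β, γ, rfl, hlen⟩ := eq_append_two (l := b) (by omega)
  have h0 : b₀.length = (List.range' 1 (n - 2)).length := by simp at hb ⊢; omega
  exact ⟨b₀ ++ [!β, β], by simp at h0 ⊢; omega, mtdrl_swap h0 β γ (n - 1) n⟩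

end S18

theorem stmt_18 (n : ℕ) (hn : 2 ≤ n) :
    IsGreatest {m : ℕ | ∃ π ρ : List ℕ, IsPermOf n π ∧ IsPermOf n ρ ∧ π ≠ ρ ∧
      m = (SMOut π ∩ SMOut ρ).ncard} (2 ^ (n - 1)) ∧
    SMOut (ident n) ⊆ SMOut (List.range' 1 (n - 2) ++ [n, n - 1])  := by
  have hincl := S18.smout_incl hn
  constructor
  · constructor
    · refine ⟨List.range' 1 (n - 2) ++ [n, n - 1], ident n, ?_, List.Perm.refl _, ?_, ?_⟩
      · show List.Perm _ (ident n)
        rw [S18.ident_split hn]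
        exact List.Perm.append_left _ (List.Perm.swap _ _ _)
      · intro h
        rw [S18.ident_split hn] at h
        have := List.append_cancel_left h
        simp at this; omega
      · rw [Set.inter_eq_right.mpr hincl,
          S18.smout_ncard (S18.ident_nodup n) (by rw [S18.ident_length]; omega),
          S18.ident_length]
    · rintro m ⟨π, ρ, hπ, hρ, hne, rfl⟩
      have hp : π.Perm (ident n) := hπ
      have hπlen : π.length = n := by rw [hp.length_eq, S18.ident_length]
      have hπnd : π.Nodup := hp.nodup_iff.mpr (S18.ident_nodup n)
      calc (SMOut π ∩ SMOut ρ).ncard ≤ (SMOut π).ncard :=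
            Set.ncard_le_ncard Set.inter_subset_left (S18.smout_finite (by omega))
        _ = 2 ^ (n - 1) := by rw [S18.smout_ncard hπnd (by omega), hπlen]
  · exact hincl
end
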